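/- For every integer m ≥ 2, every real number a, and every function X : B_{m-1} → ℝ, the average over all T in B_m of X(trunc(T))·a^{U_m(T)} equals (a/m) times the average over all T' in B_{m-1} of X(T')·(a+1)^{U_{m-1}(T')}; that is, (1/|B_m|)·Σ_{T ∈ B_m} X(trunc(T))·a^{U_m(T)} = (a/m)·(1/|B_{m-1}|)·Σ_{T' ∈ B_{m-1}} X(T')·(a+1)^{U_{m-1}(T')}. -/

import Mathlib

/-- A type-B permutation tableau of size `n`, encoded via its border steps and filling.

Border steps are indexed by `Fin n` (index `i` is the `(i+1)`-th step from the
northeast corner); `west i = true` means the `(i+1)`-th step is a west step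
(giving a column) and `west i = false` means it is a south step (giving a row
of the original, unshifted diagram).

Rows of the shifted diagram are also indexed by `Fin n`: a south step `r` indexes
the corresponding original row, and a west step `r` indexes the inserted diagonal
row whose diagonal cell lies in the column of `r`.  The cell in row `r` and the
column of a west step `c` exists iff (`r` is south and `r < c`) or (`r` is west
and `r ≤ c`); in particular the diagonal cell of the column of `c` is `(c, c)`.
Columns are ordered left-to-right by decreasing step index, rows top-to-bottom as:
diagonal rows by decreasing step index, then original rows by increasing step index.

`filling r c = true` means the cell `(r, c)` contains a 1; `filling` is `false`
outside the cells of the diagram (field `support`).  The fields `col_one`,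
`no_bad_zero` and `diag_zero` are the three defining conditions of a type-B
permutation tableau. -/
structure TypeBTableau (n : ℕ) where
  west : Fin n → Bool
  filling : Fin n → Fin n → Bool
  support : ∀ r c : Fin n, filling r c = true →
    west c = true ∧ ((west r = false ∧ (r : ℕ) < (c : ℕ)) ∨ (west r = true ∧ (r : ℕ) ≤ (c : ℕ)))
  col_one : ∀ c : Fin n, west c = true → ∃ r : Fin n, filling r c = true
  no_bad_zero : ∀ r c : Fin n,
    (west c = true ∧ ((west r = false ∧ (r : ℕ) < (c : ℕ)) ∨ (west r = true ∧ (r : ℕ) ≤ (c : ℕ)))) →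
    filling r c = false →
    ¬((∃ r' : Fin n,
        ((west r' = true ∧ west r = false) ∨
         (west r' = true ∧ west r = true ∧ (r : ℕ) < (r' : ℕ)) ∨
         (west r' = false ∧ west r = false ∧ (r' : ℕ) < (r : ℕ))) ∧
        filling r' c = true) ∧
      (∃ c' : Fin n, (c : ℕ) < (c' : ℕ) ∧ filling r c' = true))
  diag_zero : ∀ j : Fin n, west j = true → filling j j = false →
    ∀ c : Fin n, filling j c = false

namespace TypeBTableau

noncomputable instance instFintype {n : ℕ} : Fintype (TypeBTableau n) :=
  Fintype.ofInjective (fun T => (T.west, T.filling)) (by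
    rintro ⟨w1, f1, _, _, _, _⟩ ⟨w2, f2, _, _, _, _⟩ h
    simp only [Prod.mk.injEq] at h
    obtain ⟨h1, h2⟩ := h
    subst h1; subst h2; rfl)

end TypeBTableau

namespace TypeBTableau

/-- `T.IsCell r c` : the shifted Ferrers diagram of `T` has a cell in row `r` and
in the column of the west step `c`. -/
def IsCell {n : ℕ} (T : TypeBTableau n) (r c : Fin n) : Prop :=
  T.west c = true ∧
    ((T.west r = false ∧ (r : ℕ) < (c : ℕ)) ∨ (T.west r = true ∧ (r : ℕ) ≤ (c : ℕ)))

/-- `T.Above r' r` : row `r'` lies strictly above row `r` in the shifted diagram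
(diagonal rows come first, ordered by decreasing step index, followed by the
original rows ordered by increasing step index). -/
def Above {n : ℕ} (T : TypeBTableau n) (r' r : Fin n) : Prop :=
  (T.west r' = true ∧ T.west r = false) ∨
  (T.west r' = true ∧ T.west r = true ∧ (r : ℕ) < (r' : ℕ)) ∨
  (T.west r' = false ∧ T.west r = false ∧ (r' : ℕ) < (r : ℕ))

/-- The cell `(r, c)` is a restricted 0: it contains a 0 and either has a 1 above
it in its column, or is a diagonal cell. -/
def RestrictedZero {n : ℕ} (T : TypeBTableau n) (r c : Fin n) : Prop :=
  T.IsCell r c ∧ T.filling r c = false ∧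
    ((∃ r' : Fin n, T.Above r' r ∧ T.IsCell r' c ∧ T.filling r' c = true) ∨
      (T.west r = true ∧ r = c))

/-- Row `r` of the shifted diagram is unrestricted: it contains no restricted 0. -/
def Unrestricted {n : ℕ} (T : TypeBTableau n) (r : Fin n) : Prop :=
  ∀ c : Fin n, ¬ T.RestrictedZero r c

instance {n : ℕ} (T : TypeBTableau n) (r c : Fin n) : Decidable (T.RestrictedZero r c) := by
  unfold RestrictedZero IsCell Above; infer_instance

instance {n : ℕ} (T : TypeBTableau n) (r : Fin n) : Decidable (T.Unrestricted r) := by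
  unfold Unrestricted; infer_instance

/-- `U_n(T)`, the number of unrestricted rows of `T`. -/
def numUnrestricted {n : ℕ} (T : TypeBTableau n) : ℕ :=
  (Finset.univ.filter (fun r : Fin n => T.Unrestricted r)).card

end TypeBTableau

namespace TypeBTableau

/-- Truncation `B_{n+1} → B_n`: delete the last border step.  If the last step is
south the corresponding (bottom, empty) row is deleted; if it is west, the
corresponding (leftmost) column is deleted together with its inserted diagonal
row.  In the encoding this is just restriction of `west` and `filling` along
`Fin.castSucc`. -/
def trunc {n : ℕ} (T : TypeBTableau (n + 1)) : TypeBTableau n where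
  west i := T.west i.castSucc
  filling r c := T.filling r.castSucc c.castSucc
  support r c h := by
    have h' := T.support r.castSucc c.castSucc h
    simpa using h'
  col_one c hc := by
    obtain ⟨r, hr⟩ := T.col_one c.castSucc hc
    have hcell := T.support r c.castSucc hr
    have hrlt : (r : ℕ) < n := by
      have hc' : ((c.castSucc : Fin (n + 1)) : ℕ) < n := by simp
      rcases hcell.2 with ⟨_, h2⟩ | ⟨_, h2⟩ <;> omega
    refine ⟨⟨(r : ℕ), hrlt⟩, ?_⟩
    have hcast : (Fin.castSucc (⟨(r : ℕ), hrlt⟩ : Fin n)) = r := by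
      ext; simp
    simpa [hcast] using hr
  no_bad_zero r c hcell h0 := by
    rintro ⟨⟨r', hab, hr'1⟩, ⟨c', hlt, hc'1⟩⟩
    refine T.no_bad_zero r.castSucc c.castSucc ?_ h0
      ⟨⟨r'.castSucc, ?_, hr'1⟩, ⟨c'.castSucc, ?_, hc'1⟩⟩
    · simpa using hcell
    · simpa using hab
    · simpa using hlt
  diag_zero j hj h0 c := T.diag_zero j.castSucc hj h0 c.castSucc

end TypeBTableau

open Finset

lemma count_powerset {ι : Type*} [DecidableEq ι] (κ : ι → ℕ) (t : ι) (a : ℝ)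
    (s : Finset ι) (ht : t ∈ s) (hmin : ∀ r ∈ s, r ≠ t → κ t < κ r)
    (hinj : ∀ r ∈ s, ∀ r' ∈ s, κ r = κ r' → r = r') :
    ∑ A ∈ s.powerset,
        a ^ ((s.filter (fun i => i ∈ A ∨ (i ≠ t ∧ ∀ j ∈ A, ¬ κ j < κ i))).card)
      = 2*a*(1+a)^(s.card - 1) + a^(s.card - 1) - a^(s.card) := by
  induction s using Finset.strongInduction with
  | _ s ih => ?_
  by_cases hs : s = {t}
  · subst hs
    have hps : ({t} : Finset ι).powerset = {∅, {t}} := by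
      ext A
      simp [Finset.subset_singleton_iff]
    rw [hps, Finset.sum_pair (fun h => (Finset.singleton_ne_empty t) h.symm)]
    have h1 : ({t} : Finset ι).filter
        (fun i => i ∈ (∅ : Finset ι) ∨ (i ≠ t ∧ ∀ j ∈ (∅ : Finset ι), ¬ κ j < κ i)) = ∅ := by
      ext i; simp (config := {contextual := true})
    have h2 : ({t} : Finset ι).filter
        (fun i => i ∈ ({t} : Finset ι) ∨ (i ≠ t ∧ ∀ j ∈ ({t} : Finset ι), ¬ κ j < κ i)) = {t} := by
      ext i; simp (config := {contextual := true})
    rw [h1, h2]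
    simp; ring
  · -- there is an element other than t
    obtain ⟨b0, hb0s, hb0t⟩ : ∃ b0 ∈ s, b0 ≠ t := by
      by_contra h
      push_neg at h
      exact hs (Finset.eq_singleton_iff_unique_mem.mpr ⟨ht, h⟩)
    obtain ⟨b, hbs, hbmax⟩ := Finset.exists_max_image s κ ⟨b0, hb0s⟩
    have hbt : b ≠ t := by
      intro h; subst h
      exact absurd (hbmax b0 hb0s) (not_le.mpr (hmin b0 hb0s hb0t))
    set u := s.erase b with hu
    have hbu : b ∉ u := Finset.notMem_erase _ _
    have hins : insert b u = s := Finset.insert_erase hbs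
    have htu : t ∈ u := Finset.mem_erase.mpr ⟨fun h => hbt h.symm, ht⟩
    have husub : u ⊂ s := Finset.erase_ssubset hbs
    have hucard : u.card + 1 = s.card := by
      have hcp : 0 < s.card := Finset.card_pos.mpr ⟨t, ht⟩
      rw [hu, Finset.card_erase_of_mem hbs]
      omega
    have hune : u.Nonempty := ⟨t, htu⟩
    obtain ⟨e, he⟩ : ∃ e, u.card = e + 1 := ⟨u.card - 1, by
      have := Finset.card_pos.mpr hune; omega⟩
    have IH := ih u husub htu (fun r hr hrt => hmin r (Finset.mem_of_mem_erase hr) hrt)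
      (fun r hr r' hr' h => hinj r (Finset.mem_of_mem_erase hr) r' (Finset.mem_of_mem_erase hr') h)
    -- rewrite the powerset sum
    rw [← hins, Finset.sum_powerset_insert hbu]
    have claim1 : ∀ A ∈ u.powerset,
        ((insert b u).filter (fun i => i ∈ insert b A ∨ (i ≠ t ∧ ∀ j ∈ insert b A, ¬ κ j < κ i))).card
          = (u.filter (fun i => i ∈ A ∨ (i ≠ t ∧ ∀ j ∈ A, ¬ κ j < κ i))).card + 1 := by
      intro A hA
      rw [Finset.mem_powerset] at hA
      have : (insert b u).filter (fun i => i ∈ insert b A ∨ (i ≠ t ∧ ∀ j ∈ insert b A, ¬ κ j < κ i))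
          = insert b (u.filter (fun i => i ∈ A ∨ (i ≠ t ∧ ∀ j ∈ A, ¬ κ j < κ i))) := by
        rw [Finset.filter_insert]
        rw [if_pos (Or.inl (Finset.mem_insert_self b A))]
        congr 1
        apply Finset.filter_congr
        intro i hi
        have hib : i ≠ b := fun h => hbu (h ▸ hi)
        have hile : κ i ≤ κ b := hbmax i (Finset.mem_of_mem_erase hi)
        constructor
        · rintro (h | ⟨h1, h2⟩)
          · rcases Finset.mem_insert.mp h with h | h
            · exact absurd h hib
            · exact Or.inl h
          · exact Or.inr ⟨h1, fun j hj => h2 j (Finset.mem_insert_of_mem hj)⟩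
        · rintro (h | ⟨h1, h2⟩)
          · exact Or.inl (Finset.mem_insert_of_mem h)
          · refine Or.inr ⟨h1, fun j hj => ?_⟩
            rcases Finset.mem_insert.mp hj with h | h
            · subst h; omega
            · exact h2 j h
      rw [this, Finset.card_insert_of_notMem (fun h => hbu (Finset.mem_of_mem_filter _ h))]
    have claim2 : ∀ A ∈ u.powerset,
        ((insert b u).filter (fun i => i ∈ A ∨ (i ≠ t ∧ ∀ j ∈ A, ¬ κ j < κ i))).card
          = (u.filter (fun i => i ∈ A ∨ (i ≠ t ∧ ∀ j ∈ A, ¬ κ j < κ i))).card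
            + (if A = ∅ then 1 else 0) := by
      intro A hA
      rw [Finset.mem_powerset] at hA
      rw [Finset.filter_insert]
      by_cases hAe : A = ∅
      · subst hAe
        rw [if_pos (Or.inr ⟨hbt, by simp⟩), if_pos rfl,
          Finset.card_insert_of_notMem (fun h => hbu (Finset.mem_of_mem_filter _ h))]
      · obtain ⟨j0, hj0⟩ := Finset.nonempty_iff_ne_empty.mpr hAe
        have hj0u : j0 ∈ u := hA hj0
        have hj0b : j0 ≠ b := fun h => hbu (h ▸ hj0u)
        have : κ j0 < κ b := by
          have hle := hbmax j0 (Finset.mem_of_mem_erase hj0u)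
          rcases lt_or_eq_of_le hle with h | h
          · exact h
          · exact absurd (hinj j0 (Finset.mem_of_mem_erase hj0u) b hbs h) hj0b
        rw [if_neg, if_neg hAe]
        · omega
        · rintro (h | ⟨h1, h2⟩)
          · exact hbu (hA h)
          · exact h2 j0 hj0 this
    have h2' : ∑ A ∈ u.powerset,
        a ^ ((insert b u).filter (fun i => i ∈ A ∨ (i ≠ t ∧ ∀ j ∈ A, ¬ κ j < κ i))).card
        = ∑ A ∈ u.powerset,
          a ^ ((u.filter (fun i => i ∈ A ∨ (i ≠ t ∧ ∀ j ∈ A, ¬ κ j < κ i))).card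
              + (if A = ∅ then 1 else 0)) :=
      Finset.sum_congr rfl (fun A hA => by rw [claim2 A hA])
    have h1' : ∑ A ∈ u.powerset,
        a ^ ((insert b u).filter
            (fun i => i ∈ insert b A ∨ (i ≠ t ∧ ∀ j ∈ insert b A, ¬ κ j < κ i))).card
        = a * ∑ A ∈ u.powerset,
            a ^ ((u.filter (fun i => i ∈ A ∨ (i ≠ t ∧ ∀ j ∈ A, ¬ κ j < κ i))).card) := by
      rw [Finset.mul_sum]
      exact Finset.sum_congr rfl (fun A hA => by rw [claim1 A hA]; ring)
    have hsplit : ∑ A ∈ u.powerset,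
        a ^ ((u.filter (fun i => i ∈ A ∨ (i ≠ t ∧ ∀ j ∈ A, ¬ κ j < κ i))).card
            + (if A = ∅ then 1 else 0))
        = (∑ A ∈ u.powerset,
            a ^ ((u.filter (fun i => i ∈ A ∨ (i ≠ t ∧ ∀ j ∈ A, ¬ κ j < κ i))).card))
          - a ^ (u.card - 1) + a ^ u.card := by
      have hempty : (∅ : Finset ι) ∈ u.powerset := Finset.empty_mem_powerset u
      have hWe : (u.filter (fun i => i ∈ (∅ : Finset ι)
          ∨ (i ≠ t ∧ ∀ j ∈ (∅ : Finset ι), ¬ κ j < κ i))).card = u.card - 1 := by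
        have : u.filter (fun i => i ∈ (∅ : Finset ι)
            ∨ (i ≠ t ∧ ∀ j ∈ (∅ : Finset ι), ¬ κ j < κ i)) = u.erase t := by
          ext i; simp [Finset.mem_erase, and_comm]
        rw [this, Finset.card_erase_of_mem htu]
      rw [← Finset.add_sum_erase _ _ hempty, ← Finset.add_sum_erase _ _ hempty]
      have : ∀ A ∈ u.powerset.erase ∅,
          a ^ ((u.filter (fun i => i ∈ A ∨ (i ≠ t ∧ ∀ j ∈ A, ¬ κ j < κ i))).card
              + (if A = ∅ then 1 else 0))
          = a ^ ((u.filter (fun i => i ∈ A ∨ (i ≠ t ∧ ∀ j ∈ A, ¬ κ j < κ i))).card) := by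
        intro A hA
        rw [if_neg (Finset.ne_of_mem_erase hA)]
        ring
      rw [Finset.sum_congr rfl this, if_pos rfl, hWe, he]
      have E1 : e + 1 - 1 = e := rfl
      rw [E1]
      ring
    have hpow : ∀ A ∈ u.powerset,
        a ^ ((u.filter (fun i => i ∈ A ∨ (i ≠ t ∧ ∀ j ∈ A, ¬ κ j < κ i))).card + 1)
        = a * a ^ ((u.filter (fun i => i ∈ A ∨ (i ≠ t ∧ ∀ j ∈ A, ¬ κ j < κ i))).card) := by
      intro A _; ring
    have hcard' : (insert b u).card = e + 2 := by
      rw [Finset.card_insert_of_notMem hbu, he]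
    rw [h2', h1', hsplit, IH, hcard', he]
    have E1 : e + 1 - 1 = e := rfl
    have E2 : e + 2 - 1 = e + 1 := rfl
    rw [E1, E2]
    ring
open Finset

namespace TypeBTableau

theorem ext' {n : ℕ} {T₁ T₂ : TypeBTableau n} (hw : T₁.west = T₂.west)
    (hf : T₁.filling = T₂.filling) : T₁ = T₂ := by
  cases T₁; cases T₂; simp_all

variable {n : ℕ}

@[simp] lemma trunc_west (T : TypeBTableau (n+1)) (i : Fin n) :
    (trunc T).west i = T.west i.castSucc := rfl

@[simp] lemma trunc_filling (T : TypeBTableau (n+1)) (r c : Fin n) :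
    (trunc T).filling r c = T.filling r.castSucc c.castSucc := rfl

/-- L1: the inserted diagonal row of the last step never has a 1 in an old column. -/
lemma filling_last_castSucc (T : TypeBTableau (n+1)) (c : Fin n) :
    T.filling (Fin.last n) c.castSucc = false := by
  by_contra h
  rw [Bool.not_eq_false] at h
  have := T.support _ _ h
  simp only [Fin.val_last, Fin.coe_castSucc] at this
  rcases this.2 with ⟨_, h2⟩ | ⟨_, h2⟩ <;> omega

/-- L2: if the last step is a south step, the column of the last step has no cells. -/
lemma filling_last_col (T : TypeBTableau (n+1)) (h : T.west (Fin.last n) = false)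
    (r : Fin (n+1)) : T.filling r (Fin.last n) = false := by
  by_contra hh
  rw [Bool.not_eq_false] at hh
  have := (T.support _ _ hh).1
  rw [h] at this; exact Bool.false_ne_true this

lemma isCell_castSucc (T : TypeBTableau (n+1)) (r c : Fin n) :
    T.IsCell r.castSucc c.castSucc ↔ (trunc T).IsCell r c := Iff.rfl

lemma above_castSucc (T : TypeBTableau (n+1)) (r' r : Fin n) :
    T.Above r'.castSucc r.castSucc ↔ (trunc T).Above r' r := Iff.rfl

/-- in any tableau of size n+1, the last row is above every other row
provided the last step is a west step. -/
lemma above_last (T : TypeBTableau (n+1)) (h : T.west (Fin.last n) = true) (r : Fin n) :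
    T.Above (Fin.last n) r.castSucc := by
  unfold Above
  cases hw : T.west r.castSucc
  · exact Or.inl ⟨h, rfl⟩
  · exact Or.inr (Or.inl ⟨h, rfl, by simp⟩)

lemma not_above_of_last (T : TypeBTableau (n+1)) (r' : Fin (n+1)) :
    ¬ T.Above r' (Fin.last n) ∨ T.west (Fin.last n) = false := by
  cases hw : T.west (Fin.last n)
  · exact Or.inr rfl
  · refine Or.inl ?_
    rintro (⟨_, h⟩ | ⟨_, _, h⟩ | ⟨_, h, _⟩)
    · rw [hw] at h; exact Bool.noConfusion h
    · have := r'.isLt; simp only [Fin.val_last] at h; omega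
    · rw [hw] at h; exact Bool.noConfusion h

/-- transfer of restricted zeros through truncation. -/
lemma restrictedZero_castSucc (T : TypeBTableau (n+1)) (r c : Fin n) :
    T.RestrictedZero r.castSucc c.castSucc ↔ (trunc T).RestrictedZero r c := by
  unfold RestrictedZero
  constructor
  · rintro ⟨hcell, h0, hw⟩
    refine ⟨hcell, h0, ?_⟩
    rcases hw with ⟨r', hab, hc, hf⟩ | ⟨h1, h2⟩
    · refine Or.inl ?_
      rcases Fin.eq_castSucc_or_eq_last r' with ⟨r'', hr''⟩ | hr''
      · subst hr''
        exact ⟨r'', hab, hc, hf⟩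
      · subst hr''
        rw [filling_last_castSucc T c] at hf
        exact absurd hf Bool.false_ne_true
    · refine Or.inr ⟨h1, ?_⟩
      exact Fin.castSucc_injective n h2
  · rintro ⟨hcell, h0, hw⟩
    refine ⟨hcell, h0, ?_⟩
    rcases hw with ⟨r', hab, hc, hf⟩ | ⟨h1, h2⟩
    · exact Or.inl ⟨r'.castSucc, hab, hc, hf⟩
    · exact Or.inr ⟨h1, by rw [h2]⟩

end TypeBTableau
namespace TypeBTableau

variable {n : ℕ}

lemma isCell_last_col (T : TypeBTableau (n+1)) (r : Fin (n+1)) :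
    T.IsCell r (Fin.last n) ↔ T.west (Fin.last n) = true := by
  unfold IsCell
  constructor
  · exact fun h => h.1
  · intro h
    refine ⟨h, ?_⟩
    cases hw : T.west r
    · refine Or.inl ⟨rfl, ?_⟩
      simp only [Fin.val_last]
      rcases Fin.eq_castSucc_or_eq_last r with ⟨r', rfl⟩ | rfl
      · simpa using r'.isLt
      · rw [h] at hw; exact Bool.noConfusion hw
    · exact Or.inr ⟨rfl, by simpa using Nat.le_of_lt_succ r.isLt⟩

lemma isCell_last_row (T : TypeBTableau (n+1)) (c : Fin (n+1))
    (h : T.IsCell (Fin.last n) c) : c = Fin.last n := by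
  obtain ⟨h1, h2⟩ := h
  rcases Fin.eq_castSucc_or_eq_last c with ⟨c', rfl⟩ | rfl
  · exfalso
    have := c'.isLt
    rcases h2 with ⟨_, h3⟩ | ⟨_, h3⟩ <;>
      simp only [Fin.val_last, Fin.coe_castSucc] at h3 <;> omega
  · rfl

/-- L5 -/
lemma unrestricted_last_south (T : TypeBTableau (n+1))
    (h : T.west (Fin.last n) = false) : T.Unrestricted (Fin.last n) := by
  intro c ⟨hcell, _, _⟩
  have hc := isCell_last_row T c hcell
  subst hc
  rw [(isCell_last_col T _).mp hcell] at h
  exact Bool.noConfusion h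

/-- L4 -/
lemma unrestricted_last_west (T : TypeBTableau (n+1))
    (h : T.west (Fin.last n) = true) :
    T.Unrestricted (Fin.last n) ↔ T.filling (Fin.last n) (Fin.last n) = true := by
  constructor
  · intro hu
    by_contra hf
    rw [Bool.not_eq_true] at hf
    exact hu (Fin.last n) ⟨(isCell_last_col T _).mpr h, hf, Or.inr ⟨h, rfl⟩⟩
  · intro hf c ⟨hcell, h0, _⟩
    have hc := isCell_last_row T c hcell
    subst hc
    rw [hf] at h0
    exact Bool.noConfusion h0

/-- L6 -/
lemma unrestricted_castSucc_south (T : TypeBTableau (n+1))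
    (h : T.west (Fin.last n) = false) (r : Fin n) :
    T.Unrestricted r.castSucc ↔ (trunc T).Unrestricted r := by
  constructor
  · intro hu c hc
    exact hu c.castSucc ((restrictedZero_castSucc T r c).mpr hc)
  · intro hu c hc
    rcases Fin.eq_castSucc_or_eq_last c with ⟨c', rfl⟩ | rfl
    · exact hu c' ((restrictedZero_castSucc T r c').mp hc)
    · have := (isCell_last_col T r.castSucc).mp hc.1
      rw [h] at this
      exact Bool.noConfusion this

/-- L3 -/
lemma unrestricted_castSucc_west (T : TypeBTableau (n+1))
    (h : T.west (Fin.last n) = true) (r : Fin n) :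
    T.Unrestricted r.castSucc ↔
      ((trunc T).Unrestricted r ∧
        (T.filling r.castSucc (Fin.last n) = true ∨
          ∀ r' : Fin (n+1), T.Above r' r.castSucc → T.filling r' (Fin.last n) = false)) := by
  constructor
  · intro hu
    refine ⟨fun c hc => hu c.castSucc ((restrictedZero_castSucc T r c).mpr hc), ?_⟩
    by_cases hf : T.filling r.castSucc (Fin.last n) = true
    · exact Or.inl hf
    · refine Or.inr fun r' hab => ?_
      by_contra hf'
      rw [Bool.not_eq_false] at hf'
      rw [Bool.not_eq_true] at hf
      refine hu (Fin.last n) ⟨(isCell_last_col T _).mpr h, hf, Or.inl ⟨r', hab, ?_, hf'⟩⟩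
      exact (isCell_last_col T r').mpr h
  · rintro ⟨hu, hx⟩ c hc
    rcases Fin.eq_castSucc_or_eq_last c with ⟨c', rfl⟩ | rfl
    · exact hu c' ((restrictedZero_castSucc T r c').mp hc)
    · obtain ⟨hcell, h0, hwit⟩ := hc
      rcases hx with hx | hx
      · rw [hx] at h0; exact Bool.noConfusion h0
      · rcases hwit with ⟨r', hab, _, hf⟩ | ⟨_, heq⟩
        · rw [hx r' hab] at hf; exact Bool.noConfusion hf
        · exact absurd heq (by simp [Fin.ext_iff, r.isLt.ne])

/-- the κ-coordinate linearizing the `Above` relation. -/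
def kappa {m : ℕ} (T : TypeBTableau m) (r : Fin m) : ℕ :=
  if T.west r = true then m - 1 - (r : ℕ) else m + (r : ℕ)

lemma above_iff_kappa {m : ℕ} (T : TypeBTableau m) (r' r : Fin m) :
    T.Above r' r ↔ T.kappa r' < T.kappa r := by
  unfold Above kappa
  have h1 := r.isLt
  have h2 := r'.isLt
  cases hw : T.west r <;> cases hw' : T.west r' <;> simp <;> omega

lemma kappa_injective {m : ℕ} (T : TypeBTableau m) : Function.Injective T.kappa := by
  intro r r' h
  unfold kappa at h
  have h1 := r.isLt
  have h2 := r'.isLt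
  rw [Fin.ext_iff]
  rcases hw : T.west r <;> rcases hw' : T.west r' <;> rw [hw, hw'] at h <;> simp at h <;> omega

end TypeBTableau
namespace TypeBTableau

variable {n : ℕ}

/-- Extension of a tableau by a south step. -/
def extA (T' : TypeBTableau n) : TypeBTableau (n+1) where
  west := Fin.lastCases false T'.west
  filling r c := Fin.lastCases false
    (fun r0 => Fin.lastCases false (fun c0 => T'.filling r0 c0) c) r
  support r c h := by
    rcases Fin.eq_castSucc_or_eq_last r with ⟨r0, rfl⟩ | rfl
    · rcases Fin.eq_castSucc_or_eq_last c with ⟨c0, rfl⟩ | rfl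
      · simp only [Fin.lastCases_castSucc] at h ⊢
        have := T'.support r0 c0 h
        simpa using this
      · simp at h
    · simp at h
  col_one c hc := by
    rcases Fin.eq_castSucc_or_eq_last c with ⟨c0, rfl⟩ | rfl
    · simp only [Fin.lastCases_castSucc] at hc
      obtain ⟨r0, hr0⟩ := T'.col_one c0 hc
      exact ⟨r0.castSucc, by simpa using hr0⟩
    · simp at hc
  no_bad_zero r c hcell h0 := by
    rintro ⟨⟨r', hab, hf'⟩, ⟨c', hlt, hfc⟩⟩
    rcases Fin.eq_castSucc_or_eq_last c with ⟨c0, rfl⟩ | rfl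
    · rcases Fin.eq_castSucc_or_eq_last r with ⟨r0, rfl⟩ | rfl
      · rcases Fin.eq_castSucc_or_eq_last r' with ⟨r0', rfl⟩ | rfl
        · rcases Fin.eq_castSucc_or_eq_last c' with ⟨c0', rfl⟩ | rfl
          · simp only [Fin.lastCases_castSucc] at h0 hf' hfc
            refine T'.no_bad_zero r0 c0 (by simpa using hcell) h0
              ⟨⟨r0', by simpa using hab, hf'⟩, ⟨c0', by simpa using hlt, hfc⟩⟩
          · simp at hfc
        · simp at hf'
      · rcases hcell.2 with ⟨_, h2⟩ | ⟨_, h2⟩ <;>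
          simp only [Fin.val_last, Fin.coe_castSucc] at h2 <;>
          have := c0.isLt <;> omega
    · simp at hcell
  diag_zero j hj h0 c := by
    rcases Fin.eq_castSucc_or_eq_last j with ⟨j0, rfl⟩ | rfl
    · simp only [Fin.lastCases_castSucc] at hj h0
      rcases Fin.eq_castSucc_or_eq_last c with ⟨c0, rfl⟩ | rfl
      · simpa using T'.diag_zero j0 hj h0 c0
      · simp
    · simp at hj

/-- Extension of a tableau by a west step filled with `x`. -/
def extB (T' : TypeBTableau n) (x : Fin (n+1) → Bool)
    (h1 : ∃ ρ, x ρ = true)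
    (h2 : ∀ r : Fin n, x r.castSucc = true → T'.Unrestricted r) :
    TypeBTableau (n+1) where
  west := Fin.lastCases true T'.west
  filling r c := Fin.lastCases (x r)
    (fun c0 => Fin.lastCases false (fun r0 => T'.filling r0 c0) r) c
  support r c h := by
    rcases Fin.eq_castSucc_or_eq_last c with ⟨c0, rfl⟩ | rfl
    · rcases Fin.eq_castSucc_or_eq_last r with ⟨r0, rfl⟩ | rfl
      · simp only [Fin.lastCases_castSucc] at h ⊢
        have := T'.support r0 c0 h
        simpa using this
      · simp at h
    · refine ⟨Fin.lastCases_last, ?_⟩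
      rcases Fin.eq_castSucc_or_eq_last r with ⟨r0, rfl⟩ | rfl
      · simp only [Fin.lastCases_castSucc, Fin.coe_castSucc, Fin.val_last]
        cases hw : T'.west r0
        · exact Or.inl ⟨rfl, r0.isLt⟩
        · exact Or.inr ⟨rfl, le_of_lt r0.isLt⟩
      · exact Or.inr ⟨by simp, le_refl _⟩
  col_one c hc := by
    rcases Fin.eq_castSucc_or_eq_last c with ⟨c0, rfl⟩ | rfl
    · simp only [Fin.lastCases_castSucc] at hc
      obtain ⟨r0, hr0⟩ := T'.col_one c0 hc
      exact ⟨r0.castSucc, by simpa using hr0⟩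
    · obtain ⟨ρ, hρ⟩ := h1
      exact ⟨ρ, by simpa using hρ⟩
  no_bad_zero r c hcell h0 := by
    rintro ⟨⟨r', hab, hf'⟩, ⟨c', hlt, hfc⟩⟩
    rcases Fin.eq_castSucc_or_eq_last c with ⟨c0, rfl⟩ | rfl
    · rcases Fin.eq_castSucc_or_eq_last r with ⟨r0, rfl⟩ | rfl
      · rcases Fin.eq_castSucc_or_eq_last r' with ⟨r0', rfl⟩ | rfl
        · simp only [Fin.lastCases_castSucc] at h0 hf'
          have hcell' : T'.IsCell r0 c0 := by
            unfold IsCell; simpa using hcell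
          have hab' : T'.Above r0' r0 := by
            unfold Above; simpa using hab
          rcases Fin.eq_castSucc_or_eq_last c' with ⟨c0', rfl⟩ | rfl
          · simp only [Fin.lastCases_castSucc] at hfc
            exact T'.no_bad_zero r0 c0 hcell' h0
              ⟨⟨r0', hab', hf'⟩, ⟨c0', by simpa using hlt, hfc⟩⟩
          · simp only [Fin.lastCases_last] at hfc
            have hunr := h2 r0 hfc
            refine hunr c0 ⟨hcell', h0, Or.inl ⟨r0', hab', ?_, hf'⟩⟩
            exact ⟨(T'.support r0' c0 hf').1, (T'.support r0' c0 hf').2⟩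
        · simp only [Fin.lastCases_castSucc, Fin.lastCases_last] at hf'
          exact Bool.noConfusion hf'
      · rcases hcell.2 with ⟨_, h2'⟩ | ⟨h2', _⟩
        · have := c0.isLt
          simp only [Fin.val_last, Fin.coe_castSucc] at *
          omega
        · rcases hcell.2 with ⟨h3, _⟩ | ⟨_, h3⟩
          · simp at h3
          · have := c0.isLt
            simp only [Fin.val_last, Fin.coe_castSucc] at h3
            omega
    · have := c'.isLt
      simp only [Fin.val_last] at hlt
      omega
  diag_zero j hj h0 c := by
    rcases Fin.eq_castSucc_or_eq_last j with ⟨j0, rfl⟩ | rfl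
    · simp only [Fin.lastCases_castSucc, Fin.lastCases_last] at hj h0
      have hrow := T'.diag_zero j0 hj h0
      rcases Fin.eq_castSucc_or_eq_last c with ⟨c0, rfl⟩ | rfl
      · simpa using hrow c0
      · simp only [Fin.lastCases_last]
        by_contra hx
        rw [Bool.not_eq_false] at hx
        have hunr := h2 j0 hx
        exact absurd (hunr j0 ⟨⟨hj, Or.inr ⟨hj, le_refl _⟩⟩, h0, Or.inr ⟨hj, rfl⟩⟩) (by simp)
    · rcases Fin.eq_castSucc_or_eq_last c with ⟨c0, rfl⟩ | rfl
      · simp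
      · simpa using h0

@[simp] lemma extA_west_last (T' : TypeBTableau n) :
    (extA T').west (Fin.last n) = false := by simp [extA]

@[simp] lemma extB_west_last (T' : TypeBTableau n) (x h1 h2) :
    (extB T' x h1 h2).west (Fin.last n) = true := by simp [extB]

lemma trunc_extA (T' : TypeBTableau n) : trunc (extA T') = T' := by
  refine ext' ?_ ?_
  · funext i
    simp [trunc, extA]
  · funext r c
    simp [trunc, extA]

lemma trunc_extB (T' : TypeBTableau n) (x h1 h2) : trunc (extB T' x h1 h2) = T' := by
  refine ext' ?_ ?_
  · funext i
    simp [trunc, extB]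
  · funext r c
    simp [trunc, extB]

lemma extB_filling_last (T' : TypeBTableau n) (x h1 h2) (r : Fin (n+1)) :
    (extB T' x h1 h2).filling r (Fin.last n) = x r := by
  simp [extB]

end TypeBTableau
namespace TypeBTableau

variable {n : ℕ}

/-- classification: fiber element with south last step is `extA`. -/
lemma eq_extA (T : TypeBTableau (n+1)) (T' : TypeBTableau n) (hT : trunc T = T')
    (hw : T.west (Fin.last n) = false) : T = extA T' := by
  subst hT
  refine ext' ?_ ?_
  · funext i
    rcases Fin.eq_castSucc_or_eq_last i with ⟨i0, rfl⟩ | rfl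
    · simp [extA]
    · simp [extA, hw]
  · funext r c
    rcases Fin.eq_castSucc_or_eq_last c with ⟨c0, rfl⟩ | rfl
    · rcases Fin.eq_castSucc_or_eq_last r with ⟨r0, rfl⟩ | rfl
      · simp [extA]
      · simp [extA, filling_last_castSucc]
    · rw [filling_last_col T hw]
      rcases Fin.eq_castSucc_or_eq_last r with ⟨r0, rfl⟩ | rfl <;> simp [extA]

lemma numUnrestricted_extA (T' : TypeBTableau n) :
    (extA T').numUnrestricted = T'.numUnrestricted + 1 := by
  unfold numUnrestricted
  rw [Finset.card_filter, Finset.card_filter, Fin.sum_univ_castSucc]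
  congr 1
  · apply Finset.sum_congr rfl
    intro r _
    congr 1
    rw [eq_iff_iff]
    rw [unrestricted_castSucc_south (extA T') (extA_west_last T') r, trunc_extA]
  · rw [if_pos (unrestricted_last_south (extA T') (extA_west_last T'))]

/-- the candidate set of rows for ones in the new column. -/
def extSet (T' : TypeBTableau n) : Finset (Fin (n+1)) :=
  insert (Fin.last n)
    ((Finset.univ.filter (fun r => T'.Unrestricted r)).image Fin.castSucc)

lemma mem_extSet_last (T' : TypeBTableau n) : Fin.last n ∈ extSet T' :=
  Finset.mem_insert_self _ _

lemma castSucc_ne_last (r : Fin n) : r.castSucc ≠ Fin.last n := by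
  intro h
  have hlt := r.isLt
  rw [Fin.ext_iff] at h
  simp only [Fin.coe_castSucc, Fin.val_last] at h
  omega

lemma mem_extSet_castSucc (T' : TypeBTableau n) (r : Fin n) :
    r.castSucc ∈ extSet T' ↔ T'.Unrestricted r := by
  unfold extSet
  rw [Finset.mem_insert]
  constructor
  · rintro (h | h)
    · exact absurd h (castSucc_ne_last r)
    · obtain ⟨b, hb, hb2⟩ := Finset.mem_image.mp h
      rw [Fin.castSucc_injective n hb2] at hb
      exact (Finset.mem_filter.mp hb).2
  · intro h
    exact Or.inr (Finset.mem_image.mpr ⟨r, Finset.mem_filter.mpr ⟨Finset.mem_univ r, h⟩, rfl⟩)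

lemma card_extSet (T' : TypeBTableau n) :
    (extSet T').card = T'.numUnrestricted + 1 := by
  unfold extSet numUnrestricted
  rw [Finset.card_insert_of_notMem, Finset.card_image_of_injective _ (Fin.castSucc_injective n)]
  intro h
  obtain ⟨b, _, hb2⟩ := Finset.mem_image.mp h
  exact castSucc_ne_last b hb2

/-- the κ coordinate on the extended row set, independent of the extension. -/
def kappaExt (T' : TypeBTableau n) (ρ : Fin (n+1)) : ℕ :=
  Fin.lastCases 0 (fun r => T'.kappa r + 1) ρ

@[simp] lemma kappaExt_last (T' : TypeBTableau n) : kappaExt T' (Fin.last n) = 0 :=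
  Fin.lastCases_last

@[simp] lemma kappaExt_castSucc (T' : TypeBTableau n) (r : Fin n) :
    kappaExt T' r.castSucc = T'.kappa r + 1 := Fin.lastCases_castSucc r

lemma kappa_eq_kappaExt (T : TypeBTableau (n+1)) (T' : TypeBTableau n)
    (hT : trunc T = T') (hw : T.west (Fin.last n) = true) :
    T.kappa = kappaExt T' := by
  subst hT
  funext ρ
  rcases Fin.eq_castSucc_or_eq_last ρ with ⟨r, rfl⟩ | rfl
  · have hrn := r.isLt
    cases hw' : T.west r.castSucc <;>
      simp [kappa, kappaExt, hw'] <;> omega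
  · simp [kappa, kappaExt, hw]

lemma kappaExt_injective (T' : TypeBTableau n) : Function.Injective (kappaExt T') := by
  intro ρ ρ' h
  rcases Fin.eq_castSucc_or_eq_last ρ with ⟨r, rfl⟩ | rfl <;>
    rcases Fin.eq_castSucc_or_eq_last ρ' with ⟨r', rfl⟩ | rfl <;>
      simp only [kappaExt_last, kappaExt_castSucc] at h
  · rw [Nat.add_right_cancel_iff] at h
    rw [kappa_injective T' h]
  · omega
  · omega
  · rfl

end TypeBTableau
namespace TypeBTableau

variable {n : ℕ}

/-- the set of rows with a 1 in the last column. -/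
def colSet (T : TypeBTableau (n+1)) : Finset (Fin (n+1)) :=
  Finset.univ.filter (fun ρ => T.filling ρ (Fin.last n) = true)

lemma mem_colSet (T : TypeBTableau (n+1)) (ρ : Fin (n+1)) :
    ρ ∈ colSet T ↔ T.filling ρ (Fin.last n) = true := by
  simp [colSet]

/-- rows with a 1 in the last column are unrestricted rows of the truncation. -/
lemma colSet_subset (T : TypeBTableau (n+1)) (r : Fin n)
    (h : r.castSucc ∈ colSet T) : (trunc T).Unrestricted r := by
  rw [mem_colSet] at h
  intro c0 hc
  obtain ⟨hcell, h0, hwit⟩ := (restrictedZero_castSucc T r c0).mpr hc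
  rcases hwit with ⟨r', hab, hcell', hf'⟩ | ⟨hwr, heq⟩
  · refine T.no_bad_zero r.castSucc c0.castSucc hcell h0
      ⟨⟨r', hab, hf'⟩, ⟨Fin.last n, ?_, h⟩⟩
    simpa using c0.isLt
  · have h0' : T.filling r.castSucc r.castSucc = false := by
      nth_rewrite 2 [heq]; exact h0
    have := T.diag_zero r.castSucc hwr h0' (Fin.last n)
    rw [h] at this
    exact Bool.noConfusion this

lemma colSet_nonempty (T : TypeBTableau (n+1)) (hw : T.west (Fin.last n) = true) :
    (colSet T).Nonempty := by
  obtain ⟨r, hr⟩ := T.col_one (Fin.last n) hw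
  exact ⟨r, (mem_colSet T r).mpr hr⟩

lemma colSet_mem_powerset (T : TypeBTableau (n+1)) (hw : T.west (Fin.last n) = true) :
    colSet T ∈ ((extSet (trunc T)).powerset.erase ∅) := by
  rw [Finset.mem_erase, Finset.mem_powerset]
  refine ⟨Finset.nonempty_iff_ne_empty.mp (colSet_nonempty T hw), ?_⟩
  intro ρ hρ
  rcases Fin.eq_castSucc_or_eq_last ρ with ⟨r, rfl⟩ | rfl
  · exact (mem_extSet_castSucc _ r).mpr (colSet_subset T r hρ)
  · exact mem_extSet_last _

/-- weight identification for a west-extension. -/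
lemma numUnrestricted_eq_weight (T : TypeBTableau (n+1)) (hw : T.west (Fin.last n) = true) :
    T.numUnrestricted =
      ((extSet (trunc T)).filter (fun i => i ∈ colSet T ∨ (i ≠ Fin.last n ∧
        ∀ j ∈ colSet T, ¬ kappaExt (trunc T) j < kappaExt (trunc T) i))).card := by
  unfold numUnrestricted
  congr 1
  ext ρ
  simp only [Finset.mem_filter, Finset.mem_univ, true_and]
  have hκ : T.kappa = kappaExt (trunc T) := kappa_eq_kappaExt T (trunc T) rfl hw
  rcases Fin.eq_castSucc_or_eq_last ρ with ⟨r, rfl⟩ | rfl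
  · rw [unrestricted_castSucc_west T hw r]
    constructor
    · rintro ⟨hu, hx⟩
      refine ⟨(mem_extSet_castSucc _ r).mpr hu, ?_⟩
      rcases hx with hx | hx
      · exact Or.inl ((mem_colSet T _).mpr hx)
      · refine Or.inr ⟨castSucc_ne_last r, fun j hj hlt => ?_⟩
        have hab : T.Above j r.castSucc := by
          rw [above_iff_kappa, hκ]; exact hlt
        rw [mem_colSet] at hj
        rw [hx j hab] at hj
        exact Bool.noConfusion hj
    · rintro ⟨hmem, hcond⟩
      refine ⟨(mem_extSet_castSucc _ r).mp hmem, ?_⟩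
      rcases hcond with hc | ⟨_, hc⟩
      · exact Or.inl ((mem_colSet T _).mp hc)
      · refine Or.inr fun r' hab => ?_
        by_contra hf
        rw [Bool.not_eq_false] at hf
        refine hc r' ((mem_colSet T _).mpr hf) ?_
        rw [← hκ, ← above_iff_kappa]
        exact hab
  · constructor
    · intro hu
      have := (unrestricted_last_west T hw).mp hu
      exact ⟨mem_extSet_last _, Or.inl ((mem_colSet T _).mpr this)⟩
    · rintro ⟨_, hc | ⟨hne, _⟩⟩
      · exact (unrestricted_last_west T hw).mpr ((mem_colSet T _).mp hc)
      · exact absurd rfl hne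

/-- two west-extensions with the same last column agree. -/
lemma eq_of_colSet_eq (T₁ T₂ : TypeBTableau (n+1)) (hT : trunc T₁ = trunc T₂)
    (hw₁ : T₁.west (Fin.last n) = true) (hw₂ : T₂.west (Fin.last n) = true)
    (hc : colSet T₁ = colSet T₂) : T₁ = T₂ := by
  refine ext' ?_ ?_
  · funext i
    rcases Fin.eq_castSucc_or_eq_last i with ⟨i0, rfl⟩ | rfl
    · have : (trunc T₁).west i0 = (trunc T₂).west i0 := by rw [hT]
      simpa using this
    · rw [hw₁, hw₂]
  · funext r c
    rcases Fin.eq_castSucc_or_eq_last c with ⟨c0, rfl⟩ | rfl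
    · rcases Fin.eq_castSucc_or_eq_last r with ⟨r0, rfl⟩ | rfl
      · have : (trunc T₁).filling r0 c0 = (trunc T₂).filling r0 c0 := by rw [hT]
        simpa using this
      · rw [filling_last_castSucc, filling_last_castSucc]
    · cases hb : T₂.filling r (Fin.last n)
      · by_contra hcon
        rw [Bool.not_eq_false] at hcon
        have : r ∈ colSet T₂ := hc ▸ (mem_colSet T₁ r).mpr hcon
        rw [mem_colSet, hb] at this
        exact Bool.noConfusion this
      · have : r ∈ colSet T₁ := hc ▸ (mem_colSet T₂ r).mpr hb
        rwa [mem_colSet] at this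

/-- surjectivity: every admissible column set arises from a west-extension. -/
lemma exists_extB (T' : TypeBTableau n) (A : Finset (Fin (n+1)))
    (hA : A ∈ (extSet T').powerset.erase ∅) :
    ∃ T : TypeBTableau (n+1), trunc T = T' ∧ T.west (Fin.last n) = true ∧ colSet T = A := by
  rw [Finset.mem_erase, Finset.mem_powerset] at hA
  obtain ⟨hne, hsub⟩ := hA
  obtain ⟨ρ₀, hρ₀⟩ := Finset.nonempty_iff_ne_empty.mpr hne
  refine ⟨extB T' (fun ρ => decide (ρ ∈ A)) ⟨ρ₀, by simpa using hρ₀⟩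
    (fun r hr => ?_), trunc_extB T' _ _ _, extB_west_last T' _ _ _, ?_⟩
  · rw [decide_eq_true_iff] at hr
    exact (mem_extSet_castSucc T' r).mp (hsub hr)
  · ext ρ
    rw [mem_colSet, extB_filling_last, decide_eq_true_iff]

end TypeBTableau
namespace TypeBTableau

variable {n : ℕ}

open scoped Classical in
lemma fiber_sum (T' : TypeBTableau n) (a : ℝ) :
    ∑ T ∈ Finset.univ.filter (fun T : TypeBTableau (n+1) => trunc T = T'),
        a ^ T.numUnrestricted
      = 2 * a * (a + 1) ^ T'.numUnrestricted := by
  classical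
  rw [← Finset.sum_filter_add_sum_filter_not
    (Finset.univ.filter (fun T : TypeBTableau (n+1) => trunc T = T'))
    (fun T => T.west (Fin.last n) = true)]
  have hA : (Finset.univ.filter (fun T : TypeBTableau (n+1) => trunc T = T')).filter
      (fun T => ¬ T.west (Fin.last n) = true) = {extA T'} := by
    ext T
    simp only [Finset.mem_filter, Finset.mem_univ, true_and, Finset.mem_singleton,
      Bool.not_eq_true]
    constructor
    · rintro ⟨h1, h2⟩
      exact eq_extA T T' h1 h2
    · rintro rfl
      exact ⟨trunc_extA T', extA_west_last T'⟩
  have hB : ∑ T ∈ (Finset.univ.filter (fun T : TypeBTableau (n+1) => trunc T = T')).filter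
        (fun T => T.west (Fin.last n) = true), a ^ T.numUnrestricted
      = ∑ A ∈ (extSet T').powerset.erase ∅,
          a ^ ((extSet T').filter (fun i => i ∈ A ∨ (i ≠ Fin.last n ∧
            ∀ j ∈ A, ¬ kappaExt T' j < kappaExt T' i))).card := by
    refine Finset.sum_bij (fun T _ => colSet T) ?_ ?_ ?_ ?_
    · intro T hT
      simp only [Finset.mem_filter, Finset.mem_univ, true_and] at hT
      have := colSet_mem_powerset T hT.2
      rwa [hT.1] at this
    · intro T₁ h₁ T₂ h₂ hc
      simp only [Finset.mem_filter, Finset.mem_univ, true_and] at h₁ h₂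
      exact eq_of_colSet_eq T₁ T₂ (h₁.1.trans h₂.1.symm) h₁.2 h₂.2 hc
    · intro A hA
      obtain ⟨T, hT1, hT2, hT3⟩ := exists_extB T' A hA
      exact ⟨T, by simp [Finset.mem_filter, hT1, hT2], hT3⟩
    · intro T hT
      simp only [Finset.mem_filter, Finset.mem_univ, true_and] at hT
      have := numUnrestricted_eq_weight T hT.2
      rw [hT.1] at this
      rw [this]
  rw [hA, hB, Finset.sum_singleton, numUnrestricted_extA]
  have hcount := count_powerset (kappaExt T') (Fin.last n) a (extSet T')
    (mem_extSet_last T')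
    (fun r _ hr => by
      rcases Fin.eq_castSucc_or_eq_last r with ⟨r0, rfl⟩ | rfl
      · simp
      · exact absurd rfl hr)
    (fun r _ r' _ h => kappaExt_injective T' h)
  have hempty : (∅ : Finset (Fin (n+1))) ∈ (extSet T').powerset :=
    Finset.empty_mem_powerset _
  rw [Finset.sum_erase_eq_sub hempty]
  have hsub : ∑ x ∈ (extSet T').powerset,
      a ^ ((extSet T').filter (fun i => i ∈ x ∨ (i ≠ Fin.last n ∧
        ∀ j ∈ x, ¬ kappaExt T' j < kappaExt T' i))).card
      = 2 * a * (1 + a) ^ ((extSet T').card - 1) + a ^ ((extSet T').card - 1)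
        - a ^ (extSet T').card := by
    rw [← hcount]
    refine Finset.sum_congr rfl (fun A _ => ?_)
    congr 1
    apply congrArg
    ext i
    simp only [Finset.mem_filter]
  rw [hsub]
  have hWe : ((extSet T').filter (fun i => i ∈ (∅ : Finset (Fin (n+1))) ∨ (i ≠ Fin.last n ∧
      ∀ j ∈ (∅ : Finset (Fin (n+1))), ¬ kappaExt T' j < kappaExt T' i))).card
      = T'.numUnrestricted := by
    have : (extSet T').filter (fun i => i ∈ (∅ : Finset (Fin (n+1))) ∨ (i ≠ Fin.last n ∧
        ∀ j ∈ (∅ : Finset (Fin (n+1))), ¬ kappaExt T' j < kappaExt T' i))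
        = (extSet T').erase (Fin.last n) := by
      ext i
      simp [Finset.mem_erase, and_comm]
    rw [this, Finset.card_erase_of_mem (mem_extSet_last T'), card_extSet]
    omega
  rw [hWe, card_extSet]
  have E1 : T'.numUnrestricted + 1 - 1 = T'.numUnrestricted := rfl
  rw [E1]
  ring

open scoped Classical in
lemma sum_trunc_eq (a : ℝ) (X : TypeBTableau n → ℝ) :
    ∑ T : TypeBTableau (n+1), X (trunc T) * a ^ T.numUnrestricted
      = 2 * a * ∑ T' : TypeBTableau n, X T' * (a+1) ^ T'.numUnrestricted := by
  classical
  rw [← Finset.sum_fiberwise Finset.univ trunc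
    (fun T => X (trunc T) * a ^ T.numUnrestricted), Finset.mul_sum]
  refine Finset.sum_congr rfl fun T' _ => ?_
  have h1 : ∀ T ∈ Finset.univ.filter (fun T : TypeBTableau (n+1) => trunc T = T'),
      X (trunc T) * a ^ T.numUnrestricted = X T' * a ^ T.numUnrestricted := by
    intro T hT
    simp only [Finset.mem_filter, Finset.mem_univ, true_and] at hT
    rw [hT]
  rw [Finset.sum_congr rfl h1, ← Finset.mul_sum, fiber_sum]
  ring

instance : Unique (TypeBTableau 0) where
  default :=
    { west := Fin.elim0
      filling := fun r => r.elim0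
      support := fun r => r.elim0
      col_one := fun c => c.elim0
      no_bad_zero := fun r => r.elim0
      diag_zero := fun j => j.elim0 }
  uniq T := ext' (funext fun i => i.elim0) (funext fun r => r.elim0)

lemma sum_pow : ∀ (m : ℕ) (a : ℝ),
    ∑ T : TypeBTableau m, a ^ T.numUnrestricted
      = 2^m * ∏ i ∈ Finset.range m, (a + i) := by
  intro m
  induction m with
  | zero =>
    intro a
    rw [Fintype.sum_unique]
    simp [numUnrestricted]
  | succ m ih =>
    intro a
    have h := sum_trunc_eq (n := m) a (fun _ => (1:ℝ))
    simp only [one_mul] at h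
    rw [h, ih (a+1), Finset.prod_range_succ']
    have : ∀ i ∈ Finset.range m, (a + 1 + (i:ℝ)) = (a + ((i:ℕ)+1 : ℕ)) := by
      intro i _
      push_cast
      ring
    rw [Finset.prod_congr rfl this]
    push_cast
    ring

lemma card_eq (m : ℕ) :
    (Fintype.card (TypeBTableau m) : ℝ) = 2^m * ∏ i ∈ Finset.range m, (1 + (i:ℝ)) := by
  have h := sum_pow m 1
  simp only [one_pow] at h
  rw [Finset.sum_const, Finset.card_univ, nsmul_eq_mul, mul_one] at h
  exact h

end TypeBTableau

open Finset

/-- The basic recursion between the uniform measures on `B_m` and `B_{m-1}`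
(here `m = n + 1 ≥ 2`): for any real `a` and any `X : B_{m-1} → ℝ`, the average
over `T ∈ B_m` of `X(trunc T) · a ^ U_m(T)` equals `(a/m)` times the average over
`T' ∈ B_{m-1}` of `X(T') · (a+1) ^ U_{m-1}(T')`. -/
theorem average_trunc_pow_unrestricted (n : ℕ) (hn : 1 ≤ n) (a : ℝ)
    (X : TypeBTableau n → ℝ) :
    (1 / (Fintype.card (TypeBTableau (n + 1)) : ℝ)) *
        ∑ T : TypeBTableau (n + 1), X T.trunc * a ^ T.numUnrestricted =
      (a / ((n : ℝ) + 1)) *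
        ((1 / (Fintype.card (TypeBTableau n) : ℝ)) *
          ∑ T' : TypeBTableau n, X T' * (a + 1) ^ T'.numUnrestricted) := by
  rw [TypeBTableau.sum_trunc_eq a X, TypeBTableau.card_eq n, TypeBTableau.card_eq (n+1),
    Finset.prod_range_succ]
  have hP : (0:ℝ) < ∏ i ∈ Finset.range n, (1 + (i:ℝ)) :=
    Finset.prod_pos (fun i _ => by positivity)
  have h2 : (0:ℝ) < (2:ℝ)^n := by positivity
  have hn1 : (0:ℝ) < 1 + (n:ℝ) := by positivity
  field_simp
  ring
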